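/- The sequence g_n = |Av_n(132, 123*)| satisfies the recurrence g_n + g_{n-1} - g_{n-2} = Σ_{i=0}^{n-1} g_i g_{n-1-i} for n ≥ 2, with g_0 = 1 and g_1 = 1. -/

import Mathlib

/-- `isoOrd p q` : `q` is order-isomorphic to `p`. -/
def isoOrd (p q : List ℕ) : Bool :=
  (p.length == q.length) &&
    (List.range p.length).all fun i =>
      (List.range p.length).all fun j =>
        decide ((p.getD i 0 < p.getD j 0) ↔ (q.getD i 0 < q.getD j 0))

/-- `containsPat p w` : the word `w` contains an occurrence of the classical pattern `p`. -/
def containsPat (p w : List ℕ) : Bool :=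
  (w.sublistsLen p.length).any (isoOrd p)

/-- Pop phase of the right-greedy `T`-avoiding stack: with next input `a`,
pop entries from the top of the stack while pushing `a` would create a pattern of `T`
(read from top to bottom).  Returns the remaining stack and the popped entries in output order. -/
def popPhase (T : List (List ℕ)) (a : ℕ) : List ℕ → List ℕ × List ℕ
  | [] => ([], [])
  | b :: s =>
    if T.any (fun p => containsPat p (a :: b :: s)) then
      let r := popPhase T a s
      (r.1, b :: r.2)
    else (b :: s, [])

/-- Main loop of the right-greedy `T`-avoiding stack map. -/
def stkAux (T : List (List ℕ)) : List ℕ → List ℕ → List ℕ → List ℕ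
  | [], stack, out => out ++ stack
  | a :: rest, stack, out =>
    let r := popPhase T a stack
    stkAux T rest (a :: r.1) (out ++ r.2)

/-- The generalized stack-sorting map `s_T` : the input is pushed right-greedily through a
stack which must avoid (read from top to bottom) every pattern in `T`. -/
def sT (T : List (List ℕ)) (x : List ℕ) : List ℕ := stkAux T x [] []

/-- West's stack-sorting map: the stack must be increasing from top to bottom,
i.e. must avoid `21` read from top to bottom. -/
def westSort (x : List ℕ) : List ℕ := sT [[2,1]] x

/-- `x` is a permutation of `{1,…,n}`, written as a list. -/
def IsPermList (n : ℕ) (x : List ℕ) : Prop := x.Perm (List.range' 1 n)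

/-- The identity permutation `1 2 … n`. -/
def idPerm (n : ℕ) : List ℕ := List.range' 1 n

/-- `x` contains the bivincular pattern `132*` : positions `i < j` (0-based) with
`x i < x (j+1)` and `x j = x (j+1) + 1`. -/
def Has132Star (x : List ℕ) : Prop :=
  ∃ i j, i < j ∧ j + 1 < x.length ∧ x.getD i 0 < x.getD (j+1) 0 ∧
    x.getD j 0 = x.getD (j+1) 0 + 1

/-- `x` contains the bivincular pattern `123*` : positions `i < j` (0-based) with
`x i < x j` and `x (j+1) = x j + 1`. -/
def Has123Star (x : List ℕ) : Prop :=
  ∃ i j, i < j ∧ j + 1 < x.length ∧ x.getD i 0 < x.getD j 0 ∧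
    x.getD (j+1) 0 = x.getD j 0 + 1

/-- Boolean version of `Has132Star`. -/
def has132star (x : List ℕ) : Bool :=
  (List.range x.length).any fun j =>
    decide (j + 1 < x.length) && (x.getD j 0 == x.getD (j+1) 0 + 1) &&
      (List.range j).any fun i => decide (x.getD i 0 < x.getD (j+1) 0)

/-- Boolean version of `Has123Star`. -/
def has123star (x : List ℕ) : Bool :=
  (List.range x.length).any fun j =>
    decide (j + 1 < x.length) && (x.getD (j+1) 0 == x.getD j 0 + 1) &&
      (List.range j).any fun i => decide (x.getD i 0 < x.getD j 0)

/-- `g n = |Av_n(132, 123*)|`. -/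
def gCount (n : ℕ) : ℕ :=
  ((List.range' 1 n).permutations.filter fun x =>
    !containsPat [1,3,2] x && !has123star x).length

-- ===== auxiliary development =====

def C132 (w : List ℕ) : Prop := ∃ a b c : ℕ, [a,b,c].Sublist w ∧ a < c ∧ c < b

lemma isoOrd132 (q : List ℕ) :
    isoOrd [1,3,2] q = true ↔ ∃ a b c : ℕ, q = [a,b,c] ∧ a < c ∧ c < b := by
  constructor
  · intro h
    simp only [isoOrd, Bool.and_eq_true, beq_iff_eq, List.all_eq_true, List.mem_range,
      decide_eq_true_eq] at h
    obtain ⟨hlen, h⟩ := h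
    match q, hlen.symm with
    | [a,b,c], _ =>
      refine ⟨a, b, c, rfl, ?_, ?_⟩
      · have := h 0 (by norm_num) 2 (by norm_num); simpa using this.1 (by norm_num)
      · have := h 2 (by norm_num) 1 (by norm_num); simpa using this.1 (by norm_num)
  · rintro ⟨a, b, c, rfl, h1, h2⟩
    simp only [isoOrd, Bool.and_eq_true, beq_iff_eq, List.all_eq_true, List.mem_range,
      decide_eq_true_eq]
    refine ⟨rfl, ?_⟩
    intro i hi j hj
    have hi' : i < 3 := by simpa using hi
    have hj' : j < 3 := by simpa using hj
    clear hi hj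
    interval_cases i <;> interval_cases j <;> simp <;> omega

lemma contains132_iff (w : List ℕ) : containsPat [1,3,2] w = true ↔ C132 w := by
  simp only [containsPat, List.any_eq_true, C132]
  constructor
  · rintro ⟨q, hq, hiso⟩
    obtain ⟨a, b, c, rfl, h1, h2⟩ := (isoOrd132 q).1 hiso
    exact ⟨a, b, c, (List.mem_sublistsLen.1 hq).1, h1, h2⟩
  · rintro ⟨a, b, c, hs, h1, h2⟩
    exact ⟨[a,b,c], List.mem_sublistsLen.2 ⟨hs, rfl⟩, (isoOrd132 _).2 ⟨a,b,c,rfl,h1,h2⟩⟩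

lemma has123star_iff (x : List ℕ) : has123star x = true ↔ Has123Star x := by
  simp only [has123star, List.any_eq_true, List.mem_range, Bool.and_eq_true,
    decide_eq_true_eq, beq_iff_eq, Has123Star]
  constructor
  · rintro ⟨j, hj, ⟨hj1, heq⟩, i, hij, hlt⟩
    exact ⟨i, j, hij, hj1, hlt, heq⟩
  · rintro ⟨i, j, hij, hj1, hlt, heq⟩
    exact ⟨j, by omega, ⟨hj1, heq⟩, i, hij, hlt⟩

def pGood (x : List ℕ) : Bool := !containsPat [1,3,2] x && !has123star x

def Av (n : ℕ) : Finset (List ℕ) :=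
  ((List.range' 1 n).permutations.toFinset).filter (fun x => pGood x = true)

lemma mem_Av {n : ℕ} {x : List ℕ} :
    x ∈ Av n ↔ x.Perm (List.range' 1 n) ∧ ¬ C132 x ∧ ¬ Has123Star x := by
  simp only [Av, Finset.mem_filter, List.mem_toFinset, List.mem_permutations, pGood,
    Bool.and_eq_true, Bool.not_eq_true', ← contains132_iff, ← has123star_iff,
    Bool.not_eq_true, and_assoc]

lemma gCount_eq_card (n : ℕ) : gCount n = (Av n).card := by
  have hnd : (List.range' 1 n).permutations.Nodup :=
    List.nodup_permutations _ (List.nodup_range')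
  have h2 : ((List.range' 1 n).permutations.filter (fun x => pGood x)).Nodup :=
    hnd.filter _
  have : gCount n = ((List.range' 1 n).permutations.filter (fun x => pGood x)).length := rfl
  rw [this, ← List.toFinset_card_of_nodup h2, List.toFinset_filter]
  rfl

lemma getD_mem {l : List ℕ} {i : ℕ} (h : i < l.length) : l.getD i 0 ∈ l := by
  rw [List.getD_eq_getElem _ _ h]; exact List.getElem_mem _

lemma getD_app_left {l r : List ℕ} {i : ℕ} (h : i < l.length) :
    (l ++ r).getD i 0 = l.getD i 0 := by
  rw [List.getD_eq_getElem _ _ (by simp only [List.length_append, List.length_cons]; omega), List.getElem_append_left h,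
    List.getD_eq_getElem _ _ h]

lemma getD_app_mid {l r : List ℕ} {n : ℕ} :
    (l ++ n :: r).getD l.length 0 = n := by
  rw [List.getD_eq_getElem _ _ (by simp only [List.length_append, List.length_cons]; omega),
    List.getElem_append_right (le_refl l.length)]
  simp

lemma getD_app_right {l r : List ℕ} {n i : ℕ} (h : i < r.length) :
    (l ++ n :: r).getD (l.length + 1 + i) 0 = r.getD i 0 := by
  rw [List.getD_eq_getElem _ _ (by simp only [List.length_append, List.length_cons]; omega),
    List.getElem_append_right (by omega)]
  have : l.length + 1 + i - l.length = i + 1 := by omega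
  simp only [this, List.getElem_cons_succ]
  rw [List.getD_eq_getElem _ _ h]

lemma C132_split {l r : List ℕ} {n : ℕ} (hl : ∀ a ∈ l, a < n) (hr : ∀ b ∈ r, b < n)
    (hlr : ∀ a ∈ l, ∀ b ∈ r, b < a) :
    C132 (l ++ n :: r) ↔ C132 l ∨ C132 r := by
  constructor
  · rintro ⟨a, b, c, hs, h1, h2⟩
    rw [List.sublist_append_iff] at hs
    obtain ⟨u, v, huv, hu, hv⟩ := hs
    rw [List.sublist_cons_iff] at hv
    rcases u with _ | ⟨x, _ | ⟨y, _ | ⟨z, _ | ⟨w', u⟩⟩⟩⟩ <;>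
      simp only [List.cons_append, List.nil_append, List.cons.injEq, List.append_nil] at huv
    · -- u = [], v = [a,b,c]
      subst huv
      rcases hv with hv | ⟨v', hv', hsub⟩
      · exact Or.inr ⟨a, b, c, hv, h1, h2⟩
      · simp only [List.cons.injEq] at hv'
        obtain ⟨rfl, rfl⟩ := hv'
        have : c ∈ r := hsub.subset (by simp)
        exact absurd (hr c this) (by omega)
    · -- u = [a], v = [b,c]
      obtain ⟨rfl, hveq⟩ := huv
      have hal : a ∈ l := hu.subset (by simp)
      rcases hv with hv | ⟨v', hv', hsub⟩
      · have : c ∈ r := hv.subset (by rw [← hveq]; simp)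
        exact absurd (hlr a hal c this) (by omega)
      · rw [← hveq] at hv'
        simp only [List.cons.injEq] at hv'
        obtain ⟨rfl, rfl⟩ := hv'
        have : c ∈ r := hsub.subset (by simp)
        exact absurd (hlr a hal c this) (by omega)
    · -- u = [a,b], v = [c]
      obtain ⟨rfl, rfl, hveq⟩ := huv
      have hal : a ∈ l := hu.subset (by simp)
      have hbl : b ∈ l := hu.subset (by simp)
      rcases hv with hv | ⟨v', hv', hsub⟩
      · have : c ∈ r := hv.subset (by rw [← hveq]; simp)
        exact absurd (hlr a hal c this) (by omega)
      · rw [← hveq] at hv'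
        simp only [List.cons.injEq] at hv'
        obtain ⟨rfl, -⟩ := hv'
        exact absurd (hl b hbl) (by omega)
    · -- u = [a,b,c], v = []
      obtain ⟨rfl, rfl, rfl, huv⟩ := huv
      exact Or.inl ⟨a, b, c, hu, h1, h2⟩
    · -- u too long : huv has [] = w' :: ...
      exact absurd huv.2.2.2 (by simp)
  · rintro (⟨a, b, c, hs, h1, h2⟩ | ⟨a, b, c, hs, h1, h2⟩)
    · exact ⟨a, b, c, hs.trans (List.sublist_append_left _ _), h1, h2⟩
    · exact ⟨a, b, c, hs.trans ((List.sublist_cons_self _ _).trans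
        (List.sublist_append_right _ _)), h1, h2⟩

/-- junction condition -/
def Junc (l : List ℕ) (n : ℕ) : Prop :=
  n = l.getD (l.length - 1) 0 + 1 ∧
    ∃ i, i + 1 < l.length ∧ l.getD i 0 < l.getD (l.length - 1) 0

lemma H123_split {l r : List ℕ} {n : ℕ} (hr : ∀ b ∈ r, b < n)
    (hlr : ∀ a ∈ l, ∀ b ∈ r, b < a) :
    Has123Star (l ++ n :: r) ↔ Has123Star l ∨ Has123Star r ∨ Junc l n := by
  have hlen : (l ++ n :: r).length = l.length + 1 + r.length := by
    simp only [List.length_append, List.length_cons]; omega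
  constructor
  · rintro ⟨i, j, hij, hj1, hlt, heq⟩
    rw [hlen] at hj1
    rcases Nat.lt_or_ge (j+1) l.length with hc | hc
    · -- all inside l
      rw [getD_app_left (r := n :: r) (show i < l.length by omega),
        getD_app_left (r := n :: r) (show j < l.length by omega)] at hlt
      rw [getD_app_left (r := n :: r) (show j + 1 < l.length by omega),
        getD_app_left (r := n :: r) (show j < l.length by omega)] at heq
      exact Or.inl ⟨i, j, hij, hc, hlt, heq⟩
    · rcases Nat.eq_or_lt_of_le hc with hc | hc
      · -- j + 1 = l.length : junction
        rw [getD_app_left (r := n :: r) (show i < l.length by omega),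
          getD_app_left (r := n :: r) (show j < l.length by omega)] at hlt
        rw [← hc, getD_app_mid,
          getD_app_left (r := n :: r) (show j < l.length by omega)] at heq
        refine Or.inr (Or.inr ⟨?_, i, by omega, ?_⟩)
        · rw [show l.length - 1 = j by omega]; exact heq
        · rw [show l.length - 1 = j by omega]; exact hlt
      · rcases Nat.eq_or_lt_of_le hc with hc | hc
        · -- j = l.length : impossible
          have hj : j = l.length := by omega
          subst hj
          have h0 : 0 < r.length := by omega
          rw [getD_app_mid, show l.length + 1 = l.length + 1 + 0 from rfl,
            getD_app_right h0] at heq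
          have := hr _ (getD_mem h0)
          omega
        · -- j > l.length : inside r
          obtain ⟨j', rfl⟩ : ∃ j', j = l.length + 1 + j' :=
            ⟨j - l.length - 1, by omega⟩
          have hj' : j' + 1 < r.length := by omega
          rw [getD_app_right (show j' < r.length by omega)] at hlt heq
          rw [show l.length + 1 + j' + 1 = l.length + 1 + (j' + 1) by omega,
            getD_app_right hj'] at heq
          have hxjr : r.getD j' 0 ∈ r := getD_mem (by omega)
          rcases Nat.lt_or_ge i l.length with hi | hi
          · rw [getD_app_left (r := n :: r) hi] at hlt
            exact absurd (hlr _ (getD_mem hi) _ hxjr) (by omega)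
          · rcases Nat.eq_or_lt_of_le hi with hi | hi
            · rw [← hi, getD_app_mid] at hlt
              exact absurd (hr _ hxjr) (by omega)
            · obtain ⟨i', rfl⟩ : ∃ i', i = l.length + 1 + i' :=
                ⟨i - l.length - 1, by omega⟩
              rw [getD_app_right (show i' < r.length by omega)] at hlt
              exact Or.inr (Or.inl ⟨i', j', by omega, hj', hlt, heq⟩)
  · rintro (⟨i, j, hij, hj1, hlt, heq⟩ | ⟨i, j, hij, hj1, hlt, heq⟩ | ⟨heqn, i, hi1, hlt⟩)
    · refine ⟨i, j, hij, by omega, ?_, ?_⟩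
      · rw [getD_app_left (r := n :: r) (show i < l.length by omega),
          getD_app_left (r := n :: r) (show j < l.length by omega)]
        exact hlt
      · rw [getD_app_left (r := n :: r) (show j + 1 < l.length by omega),
          getD_app_left (r := n :: r) (show j < l.length by omega)]
        exact heq
    · refine ⟨l.length + 1 + i, l.length + 1 + j, by omega, by rw [hlen]; omega, ?_, ?_⟩
      · rw [getD_app_right (show i < r.length by omega),
          getD_app_right (show j < r.length by omega)]
        exact hlt
      · rw [show l.length + 1 + j + 1 = l.length + 1 + (j + 1) by omega,
          getD_app_right (show j + 1 < r.length by omega),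
          getD_app_right (show j < r.length by omega)]
        exact heq
    · refine ⟨i, l.length - 1, by omega, by rw [hlen]; omega, ?_, ?_⟩
      · rw [getD_app_left (r := n :: r) (show i < l.length by omega),
          getD_app_left (r := n :: r) (show l.length - 1 < l.length by omega)]
        exact hlt
      · rw [show l.length - 1 + 1 = l.length by omega, getD_app_mid,
          getD_app_left (r := n :: r) (show l.length - 1 < l.length by omega)]
        omega

lemma C132_shift {m : ℕ} {w : List ℕ} : C132 (w.map (· + m)) ↔ C132 w := by
  constructor
  · rintro ⟨a, b, c, hs, h1, h2⟩
    rw [List.sublist_map_iff] at hs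
    obtain ⟨l', hl', heq⟩ := hs
    match l', heq with
    | [a', b', c'], heq =>
      simp only [List.map_cons, List.map_nil, List.cons.injEq] at heq
      obtain ⟨ha, hb, hc, -⟩ := heq
      exact ⟨a', b', c', hl', by omega, by omega⟩
  · rintro ⟨a, b, c, hs, h1, h2⟩
    exact ⟨a + m, b + m, c + m, by simpa using hs.map (· + m), by omega, by omega⟩

lemma getD_map_shift {m : ℕ} {w : List ℕ} {i : ℕ} (h : i < w.length) :
    (w.map (· + m)).getD i 0 = w.getD i 0 + m := by
  rw [List.getD_eq_getElem _ _ (by simpa using h), List.getElem_map,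
    List.getD_eq_getElem _ _ h]

lemma H123_shift {m : ℕ} {w : List ℕ} : Has123Star (w.map (· + m)) ↔ Has123Star w := by
  have hl : (w.map (· + m)).length = w.length := by simp
  constructor
  · rintro ⟨i, j, hij, hj1, hlt, heq⟩
    rw [hl] at hj1
    rw [getD_map_shift (by omega), getD_map_shift (by omega)] at hlt
    rw [getD_map_shift (by omega), getD_map_shift (by omega)] at heq
    exact ⟨i, j, hij, hj1, by omega, by omega⟩
  · rintro ⟨i, j, hij, hj1, hlt, heq⟩
    refine ⟨i, j, hij, by omega, ?_, ?_⟩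
    · rw [getD_map_shift (by omega), getD_map_shift (by omega)]; omega
    · rw [getD_map_shift (by omega), getD_map_shift (by omega)]; omega

lemma classify {k m : ℕ} {x : List ℕ} (hx : x ∈ Av (k + m + 1))
    (hidx : x.idxOf (k + m + 1) = k) :
    x = x.take k ++ (k + m + 1) :: x.drop (k + 1) ∧
    (x.take k).Perm (List.range' (m + 1) k) ∧
    (x.drop (k + 1)).Perm (List.range' 1 m) := by
  set n := k + m + 1 with hn
  obtain ⟨hperm, hc, hh⟩ := mem_Av.1 hx
  have hlen : x.length = n := by rw [hperm.length_eq, List.length_range']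
  have hnmem : n ∈ x := hperm.mem_iff.2 (by rw [List.mem_range'_1]; omega)
  have hklt : k < x.length := hidx ▸ List.idxOf_lt_length_iff.2 hnmem
  have hget : x[k] = n := by
    have h' : x[k]? = some n := by
      rw [← hidx]; exact List.getElem?_idxOf hnmem
    rw [List.getElem?_eq_getElem hklt] at h'
    exact Option.some.inj h'
  have h1 : x.drop k = n :: x.drop (k+1) := by
    rw [List.drop_eq_getElem_cons hklt, hget]
  have hsplit : x = x.take k ++ n :: x.drop (k+1) := by
    conv_lhs => rw [← List.take_append_drop k x, h1]
  have hnd : x.Nodup := hperm.nodup_iff.2 (List.nodup_range')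
  have hnd2 := hsplit ▸ hnd
  rw [List.nodup_append] at hnd2
  obtain ⟨ndtake, ndcons, hdisj⟩ := hnd2
  have ndrop : (x.drop (k+1)).Nodup := (List.nodup_cons.1 ndcons).2
  have hnnd : n ∉ x.drop (k+1) := (List.nodup_cons.1 ndcons).1
  have hnnt : n ∉ x.take k := fun h => hdisj _ h _ List.mem_cons_self rfl
  have bounds : ∀ v ∈ x, 1 ≤ v ∧ v ≤ n := by
    intro v hv
    have := hperm.mem_iff.1 hv
    rw [List.mem_range'_1] at this
    omega
  have htm : ∀ a ∈ x.take k, a ∈ x := fun a ha => (List.take_sublist k x).subset ha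
  have hdm : ∀ b ∈ x.drop (k+1), b ∈ x := fun b hb => (List.drop_sublist (k+1) x).subset hb
  have key : ∀ a ∈ x.take k, ∀ b ∈ x.drop (k+1), b < a := by
    intro a ha b hb
    by_contra hab
    have hne : a ≠ b := by
      rintro rfl
      exact hdisj _ ha _ (List.mem_cons_of_mem _ hb) rfl
    have halb : a < b := by omega
    have hbn : b < n := by
      have := (bounds b (hdm b hb)).2
      have : b ≠ n := fun h => hnnd (h ▸ hb)
      omega
    refine hc ⟨a, n, b, ?_, halb, hbn⟩
    have hs2 : ([n, b] : List ℕ).Sublist (n :: x.drop (k+1)) :=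
      (List.singleton_sublist.2 hb).cons₂ n
    have := (List.singleton_sublist.2 ha).append hs2
    rwa [← hsplit] at this
  have hlentake : (x.take k).length = k := by
    rw [List.length_take]; omega
  have hlendrop : (x.drop (k+1)).length = m := by
    rw [List.length_drop]; omega
  have lowbd : ∀ a ∈ x.take k, m + 1 ≤ a := by
    intro a ha
    have hsub : (x.drop (k+1)).toFinset ⊆ Finset.Ico 1 a := by
      intro b hb
      rw [List.mem_toFinset] at hb
      rw [Finset.mem_Ico]
      exact ⟨(bounds b (hdm b hb)).1, key a ha b hb⟩
    have hcard := Finset.card_le_card hsub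
    rw [List.toFinset_card_of_nodup ndrop, hlendrop, Nat.card_Ico] at hcard
    have := (bounds a (htm a ha)).1
    omega
  have upbd : ∀ b ∈ x.drop (k+1), b ≤ m := by
    intro b hb
    have hbn : b ≤ n := (bounds b (hdm b hb)).2
    have hbne : b ≠ n := fun h => hnnd (h ▸ hb)
    rcases Nat.eq_zero_or_pos k with hk0 | hk0
    · omega
    · have hsub : (x.take k).toFinset ⊆ Finset.Ioc b (m + k) := by
        intro a ha
        rw [List.mem_toFinset] at ha
        rw [Finset.mem_Ioc]
        have han : a ≤ n := (bounds a (htm a ha)).2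
        have hane : a ≠ n := fun h => hnnt (h ▸ ha)
        exact ⟨key a ha b hb, by omega⟩
      have hcard := Finset.card_le_card hsub
      rw [List.toFinset_card_of_nodup ndtake, hlentake, Nat.card_Ioc] at hcard
      omega
  have ptake : (x.take k).Perm (List.range' (m + 1) k) := by
    apply List.perm_of_nodup_nodup_toFinset_eq ndtake (List.nodup_range')
    apply Finset.eq_of_subset_of_card_le
    · intro a ha
      rw [List.mem_toFinset] at ha ⊢
      rw [List.mem_range'_1]
      have han : a ≤ n := (bounds a (htm a ha)).2
      have hane : a ≠ n := fun h => hnnt (h ▸ ha)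
      exact ⟨lowbd a ha, by omega⟩
    · rw [List.toFinset_card_of_nodup ndtake, hlentake,
        List.toFinset_card_of_nodup (List.nodup_range'), List.length_range']
  have pdrop : (x.drop (k+1)).Perm (List.range' 1 m) := by
    apply List.perm_of_nodup_nodup_toFinset_eq ndrop (List.nodup_range')
    apply Finset.eq_of_subset_of_card_le
    · intro b hb
      rw [List.mem_toFinset] at hb ⊢
      rw [List.mem_range'_1]
      exact ⟨(bounds b (hdm b hb)).1, by have := upbd b hb; omega⟩
    · rw [List.toFinset_card_of_nodup ndrop, hlendrop,
        List.toFinset_card_of_nodup (List.nodup_range'), List.length_range']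
  exact ⟨hsplit, ptake, pdrop⟩

lemma getD_ne_getD_of_nodup {l : List ℕ} (h : l.Nodup) {i j : ℕ}
    (hi : i < l.length) (hj : j < l.length) (hij : i ≠ j) :
    l.getD i 0 ≠ l.getD j 0 := by
  rw [List.getD_eq_getElem _ _ hi, List.getD_eq_getElem _ _ hj]
  simp only [Ne, h.getElem_inj_iff]
  exact hij

lemma junc_iff {k m : ℕ} {lw : List ℕ} (hp : lw.Perm (List.range' 1 k)) :
    Junc (lw.map (· + m)) (k + m + 1) ↔ (2 ≤ k ∧ lw.getD (k - 1) 0 = k) := by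
  have hlen : lw.length = k := by rw [hp.length_eq, List.length_range']
  have hlen' : (lw.map (· + m)).length = k := by simp [hlen]
  have hnd : lw.Nodup := hp.nodup_iff.2 (List.nodup_range')
  have hmem : ∀ v ∈ lw, 1 ≤ v ∧ v ≤ k := by
    intro v hv
    have := hp.mem_iff.1 hv
    rw [List.mem_range'_1] at this
    omega
  constructor
  · rintro ⟨heq, i, hi, hlt⟩
    rw [hlen'] at hi heq
    have hk2 : 2 ≤ k := by omega
    rw [getD_map_shift (by omega)] at heq
    exact ⟨hk2, by omega⟩
  · rintro ⟨hk2, hval⟩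
    have h0 : lw.getD 0 0 ∈ lw := getD_mem (by omega)
    have hne : lw.getD 0 0 ≠ lw.getD (k-1) 0 :=
      getD_ne_getD_of_nodup hnd (by omega) (by omega) (by omega)
    have hlt0 : lw.getD 0 0 < k := by
      have := (hmem _ h0).2
      omega
    refine ⟨?_, 0, by rw [hlen']; omega, ?_⟩
    · rw [hlen', getD_map_shift (by omega)]
      omega
    · rw [hlen', getD_map_shift (by omega), getD_map_shift (by omega)]
      omega

def Bset (k : ℕ) : Finset (List ℕ) :=
  (Av k).filter (fun l => ¬(2 ≤ k ∧ l.getD (k-1) 0 = k))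

def fib (n k : ℕ) : Finset (List ℕ) :=
  (Av n).filter (fun x => x.idxOf n = k)

lemma indexOf_app {l r : List ℕ} {n : ℕ} (h : n ∉ l) :
    (l ++ n :: r).idxOf n = l.length := by
  rw [List.idxOf_append_of_notMem h, List.idxOf_cons_self]
  omega

lemma perm_juggle {α : Type*} (l₁ l₂ : List α) (a : α) :
    (l₁ ++ a :: l₂).Perm ((l₂ ++ l₁) ++ [a]) :=
  List.perm_middle.trans ((List.Perm.cons a List.perm_append_comm).trans
    (List.perm_append_singleton a (l₂ ++ l₁)).symm)

lemma map_shift_range' (m k : ℕ) :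
    (List.range' 1 k).map (· + m) = List.range' (m+1) k := by
  rw [show (fun x : ℕ => x + m) = (fun x : ℕ => m + x) from funext fun x => Nat.add_comm x m,
    List.map_add_range']

lemma perm_glue (k m : ℕ) :
    (List.range' (m+1) k ++ (k+m+1) :: List.range' 1 m).Perm (List.range' 1 (k+m+1)) := by
  have h1 : List.range' 1 m ++ List.range' (m+1) k = List.range' 1 (k+m) := by
    have := List.range'_append_1 (s := 1) (m := m) (n := k)
    rw [show 1 + m = m + 1 by omega, Nat.add_comm m k] at this
    exact this
  have h2 : List.range' 1 (k+m+1) = List.range' 1 (k+m) ++ [k+m+1] := by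
    have := List.range'_1_concat (s := 1) (n := k+m)
    rw [show 1 + (k+m) = k+m+1 by omega] at this
    exact this
  rw [h2, ← h1]
  exact perm_juggle _ _ _

lemma glue_mem {k m : ℕ} {l r : List ℕ} (hl : l ∈ Bset k) (hr : r ∈ Av m) :
    (l.map (· + m) ++ (k+m+1) :: r) ∈ fib (k+m+1) k := by
  obtain ⟨hlav, hlbad⟩ := Finset.mem_filter.1 hl
  obtain ⟨hlperm, hlc, hlh⟩ := mem_Av.1 hlav
  obtain ⟨hrperm, hrc, hrh⟩ := mem_Av.1 hr
  have hl'perm : (l.map (· + m)).Perm (List.range' (m+1) k) := by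
    have := hlperm.map (· + m)
    rwa [map_shift_range'] at this
  have hlv : ∀ a ∈ l.map (· + m), m + 1 ≤ a ∧ a ≤ m + k := by
    intro a ha
    have := hl'perm.mem_iff.1 ha
    rw [List.mem_range'_1] at this
    omega
  have hrv : ∀ b ∈ r, 1 ≤ b ∧ b ≤ m := by
    intro b hb
    have := hrperm.mem_iff.1 hb
    rw [List.mem_range'_1] at this
    omega
  have hlt : ∀ a ∈ l.map (· + m), a < k+m+1 := fun a ha => by have := hlv a ha; omega
  have hrlt : ∀ b ∈ r, b < k+m+1 := fun b hb => by have := hrv b hb; omega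
  have hlr : ∀ a ∈ l.map (· + m), ∀ b ∈ r, b < a := by
    intro a ha b hb
    have := hlv a ha; have := hrv b hb; omega
  rw [fib, Finset.mem_filter, mem_Av]
  refine ⟨⟨?_, ?_, ?_⟩, ?_⟩
  · exact (hl'perm.append (hrperm.cons _)).trans (perm_glue k m)
  · rw [C132_split hlt hrlt hlr]
    rintro (h | h)
    · exact hlc (C132_shift.1 h)
    · exact hrc h
  · rw [H123_split hrlt hlr]
    rintro (h | h | h)
    · exact hlh (H123_shift.1 h)
    · exact hrh h
    · exact hlbad ((junc_iff hlperm).1 h)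
  · rw [indexOf_app (fun hmem => by have := hlv _ hmem; omega)]
    rw [List.length_map, hlperm.length_eq, List.length_range']

lemma decompose_mem {k m : ℕ} {x : List ℕ} (hx : x ∈ fib (k+m+1) k) :
    ((x.take k).map (· - m) ∈ Bset k ∧ x.drop (k+1) ∈ Av m ∧
      ((x.take k).map (· - m)).map (· + m) ++ (k+m+1) :: x.drop (k+1) = x) := by
  obtain ⟨hxav, hidx⟩ := Finset.mem_filter.1 hx
  obtain ⟨hsplit, ptake, pdrop⟩ := classify hxav hidx
  obtain ⟨hxperm, hxc, hxh⟩ := mem_Av.1 hxav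
  have htv : ∀ a ∈ x.take k, m + 1 ≤ a ∧ a ≤ m + k := by
    intro a ha
    have := ptake.mem_iff.1 ha
    rw [List.mem_range'_1] at this
    omega
  have hdv : ∀ b ∈ x.drop (k+1), 1 ≤ b ∧ b ≤ m := by
    intro b hb
    have := pdrop.mem_iff.1 hb
    rw [List.mem_range'_1] at this
    omega
  have hrecov : ((x.take k).map (· - m)).map (· + m) = x.take k := by
    rw [List.map_map]
    refine (List.map_congr_left ?_).trans (List.map_id _)
    intro a ha
    have := htv a ha
    simp only [Function.comp_apply, id_eq]
    omega
  have hlwperm : ((x.take k).map (· - m)).Perm (List.range' 1 k) := by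
    have h1 := ptake.map (· - m)
    have h2 : (List.range' (m+1) k).map (· - m) = List.range' 1 k := by
      rw [← map_shift_range', List.map_map]
      refine (List.map_congr_left ?_).trans (List.map_id _)
      intro a _
      simp only [Function.comp_apply, id_eq]
      omega
    rwa [h2] at h1
  have hlt : ∀ a ∈ x.take k, a < k+m+1 := fun a ha => by have := htv a ha; omega
  have hrlt : ∀ b ∈ x.drop (k+1), b < k+m+1 := fun b hb => by have := hdv b hb; omega
  have hlr : ∀ a ∈ x.take k, ∀ b ∈ x.drop (k+1), b < a := by
    intro a ha b hb
    have := htv a ha; have := hdv b hb; omega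
  rw [hsplit, C132_split hlt hrlt hlr] at hxc
  rw [hsplit, H123_split hrlt hlr] at hxh
  push_neg at hxc hxh
  refine ⟨?_, ?_, ?_⟩
  · rw [Bset, Finset.mem_filter, mem_Av]
    refine ⟨⟨hlwperm, ?_, ?_⟩, ?_⟩
    · intro h
      have h2 := (C132_shift (m := m)).2 h
      rw [hrecov] at h2
      exact hxc.1 h2
    · intro h
      have h2 := (H123_shift (m := m)).2 h
      rw [hrecov] at h2
      exact hxh.1 h2
    · intro hbad
      have := (junc_iff (m := m) hlwperm).2 hbad
      rw [hrecov] at this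
      exact hxh.2.2 this
  · rw [mem_Av]
    exact ⟨pdrop, hxc.2, hxh.2.1⟩
  · rw [hrecov, ← hsplit]

lemma fib_card (k m : ℕ) : (fib (k+m+1) k).card = (Bset k).card * (Av m).card := by
  rw [← Finset.card_product]
  apply Finset.card_bij' (i := fun x (_ : x ∈ fib (k+m+1) k) =>
      ((x.take k).map (· - m), x.drop (k+1)))
    (j := fun p (_ : p ∈ (Bset k) ×ˢ (Av m)) => p.1.map (· + m) ++ (k+m+1) :: p.2)
  · intro x hx
    obtain ⟨h1, h2, -⟩ := decompose_mem hx
    exact Finset.mem_product.2 ⟨h1, h2⟩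
  · intro p hp
    obtain ⟨h1, h2⟩ := Finset.mem_product.1 hp
    exact glue_mem h1 h2
  · intro x hx
    obtain ⟨-, -, h3⟩ := decompose_mem hx
    exact h3
  · intro p hp
    obtain ⟨h1, h2⟩ := Finset.mem_product.1 hp
    obtain ⟨hlav, -⟩ := Finset.mem_filter.1 h1
    obtain ⟨hlperm, -, -⟩ := mem_Av.1 hlav
    have hlen : (p.1.map (· + m)).length = k := by
      rw [List.length_map, hlperm.length_eq, List.length_range']
    have htake : (p.1.map (· + m) ++ (k+m+1) :: p.2).take k = p.1.map (· + m) :=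
      List.take_left' hlen
    have hdrop : (p.1.map (· + m) ++ (k+m+1) :: p.2).drop (k+1) = p.2 := by
      have : p.1.map (· + m) ++ (k+m+1) :: p.2 = (p.1.map (· + m) ++ [k+m+1]) ++ p.2 := by
        simp
      rw [this, List.drop_left' (by simp [hlen])]
    have hback : (p.1.map (· + m)).map (· - m) = p.1 := by
      rw [List.map_map]
      refine (List.map_congr_left ?_).trans (List.map_id _)
      intro a _
      simp only [Function.comp_apply, id_eq]
      omega
    ext : 1
    · simp only [htake, hback]
    · simp only [hdrop]

lemma av_card_sum {n : ℕ} (hn : 1 ≤ n) :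
    (Av n).card = ∑ k ∈ Finset.range n, (Bset k).card * (Av (n-1-k)).card := by
  rw [Finset.card_eq_sum_card_fiberwise (f := fun x => x.idxOf n)
    (t := Finset.range n) ?_]
  · apply Finset.sum_congr rfl
    intro k hk
    rw [Finset.mem_range] at hk
    have hnk : n = k + (n-1-k) + 1 := by omega
    have : (Av n).filter (fun x => x.idxOf n = k) = fib n k := rfl
    rw [this, hnk, fib_card k (n-1-k)]
    have e : k + (n - 1 - k) + 1 - 1 - k = n - 1 - k := by omega
    rw [e]
  · intro x hx
    rw [Finset.mem_coe, Finset.mem_range]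
    obtain ⟨hperm, -, -⟩ := mem_Av.1 hx
    have hnx : n ∈ x := hperm.mem_iff.2 (by rw [List.mem_range'_1]; omega)
    have := List.idxOf_lt_length_iff.2 hnx
    rwa [hperm.length_eq, List.length_range'] at this

def Ehat (k : ℕ) : ℕ := ((Av k).filter (fun l => (2 ≤ k ∧ l.getD (k-1) 0 = k))).card

lemma Bset_card (k : ℕ) : ((Bset k).card : ℤ) = (gCount k : ℤ) - (Ehat k : ℤ) := by
  have h := Finset.card_filter_add_card_filter_not (s := Av k)
    (p := fun l => (2 ≤ k ∧ l.getD (k-1) 0 = k))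
  have hB : (Bset k).card + Ehat k = gCount k := by
    rw [gCount_eq_card, ← h, Ehat, Bset]
    omega
  omega

lemma Ehat_zero {k : ℕ} (hk : k ≤ 1) : Ehat k = 0 := by
  rw [Ehat, Finset.card_eq_zero]
  apply Finset.filter_false_of_mem
  rintro x - ⟨h2, -⟩
  omega

lemma not_C132_short {w : List ℕ} (h : w.length ≤ 2) : ¬ C132 w := by
  rintro ⟨a, b, c, hs, -, -⟩
  have := hs.length_le
  simp at this
  omega

lemma not_H123_short {w : List ℕ} (h : w.length ≤ 2) : ¬ Has123Star w := by
  rintro ⟨i, j, hij, hj1, -, -⟩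
  omega

lemma av_zero : (Av 0).card = 1 := by
  have : Av 0 = {([] : List ℕ)} := by
    ext x
    rw [Finset.mem_singleton, mem_Av]
    constructor
    · rintro ⟨hp, -, -⟩
      exact List.perm_nil.1 hp
    · rintro rfl
      exact ⟨List.Perm.refl _, not_C132_short (by simp), not_H123_short (by simp)⟩
  rw [this, Finset.card_singleton]

lemma av_one : (Av 1).card = 1 := by
  have : Av 1 = {([1] : List ℕ)} := by
    ext x
    rw [Finset.mem_singleton, mem_Av]
    constructor
    · rintro ⟨hp, -, -⟩
      exact List.perm_singleton.1 hp
    · rintro rfl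
      exact ⟨List.Perm.refl _, not_C132_short (by simp), not_H123_short (by simp)⟩
  rw [this, Finset.card_singleton]

lemma gCount_zero : gCount 0 = 1 := by rw [gCount_eq_card]; exact av_zero
lemma gCount_one : gCount 1 = 1 := by rw [gCount_eq_card]; exact av_one

lemma EhatS {p : ℕ} : (Ehat (p+2) : ℤ) = ((Bset (p+1)).card : ℤ) := by
  have hset : (Av (p+2)).filter (fun l => (2 ≤ p+2 ∧ l.getD (p+2-1) 0 = p+2)) =
      fib (p+2) (p+1) := by
    apply Finset.filter_congr
    intro x hx
    obtain ⟨hperm, -, -⟩ := mem_Av.1 hx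
    have hlen : x.length = p + 2 := by rw [hperm.length_eq, List.length_range']
    have hnd : x.Nodup := hperm.nodup_iff.2 (List.nodup_range')
    have hnx : (p+2) ∈ x := hperm.mem_iff.2 (by rw [List.mem_range'_1]; omega)
    have hio : x.idxOf (p+2) < x.length := List.idxOf_lt_length_iff.2 hnx
    have hgi : x[x.idxOf (p+2)]'hio = p+2 := List.getElem_idxOf hio
    constructor
    · rintro ⟨-, hval⟩
      rw [List.getD_eq_getElem _ _ (by omega)] at hval
      have := (hnd.getElem_inj_iff (hi := hio) (hj := by omega)).1 (hgi.trans hval.symm)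
      simpa using this
    · intro hidx
      refine ⟨by omega, ?_⟩
      rw [List.getD_eq_getElem _ _ (by omega)]
      have h' : x[p+1]? = some (p+2) := by
        rw [← hidx]; exact List.getElem?_idxOf hnx
      rw [List.getElem?_eq_getElem (by omega)] at h'
      exact Option.some.inj h'
  have h2 : Ehat (p+2) = (fib (p+2) (p+1)).card := by rw [Ehat, hset]
  have h3 := fib_card (p+1) 0
  have h4 : (Av 0).card = 1 := av_zero
  rw [h2]
  have : (p+1) + 0 + 1 = p + 2 := by omega
  rw [this] at h3
  rw [h3, h4, Nat.mul_one]

lemma F1 {q : ℕ} (hq : 1 ≤ q) :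
    (gCount q : ℤ) = ∑ k ∈ Finset.range q, ((Bset k).card : ℤ) * (gCount (q-1-k) : ℤ) := by
  have h : gCount q = ∑ k ∈ Finset.range q, (Bset k).card * gCount (q-1-k) := by
    rw [gCount_eq_card, av_card_sum hq]
    exact Finset.sum_congr rfl fun k _ => by rw [gCount_eq_card]
  exact_mod_cast h

theorem g_recurrence' :
    gCount 0 = 1 ∧ gCount 1 = 1 ∧ ∀ n, 2 ≤ n →
      (gCount n : ℤ) + gCount (n-1) - gCount (n-2) =
        ∑ i ∈ Finset.range n, (gCount i : ℤ) * gCount (n-1-i) := by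
  refine ⟨gCount_zero, gCount_one, ?_⟩
  intro n hn
  obtain ⟨p, rfl⟩ : ∃ p, n = p + 2 := ⟨n - 2, by omega⟩
  have hred : p + 2 - 1 = p + 1 := rfl
  have hred2 : p + 2 - 2 = p := rfl
  -- Esum computation
  have hEsum : ∑ k ∈ Finset.range (p+2), (Ehat k : ℤ) * (gCount (p+1-k) : ℤ)
      = (gCount (p+1) : ℤ) - (gCount p : ℤ) := by
    rw [Finset.sum_range_succ', Finset.sum_range_succ']
    have e0 : (Ehat 0 : ℤ) = 0 := by rw [Ehat_zero (by omega)]; norm_num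
    have e1 : (Ehat (0+1) : ℤ) = 0 := by rw [Ehat_zero (by omega)]; norm_num
    rw [e0, e1, zero_mul, zero_mul, add_zero, add_zero]
    have hF := F1 (q := p+1) (by omega)
    rw [Finset.sum_range_succ'] at hF
    have hB0 : ((Bset 0).card : ℤ) = 1 := by
      rw [Bset_card, gCount_zero, Ehat_zero (by omega)]
      norm_num
    have hsc : ∑ k ∈ Finset.range p, (Ehat (k+1+1) : ℤ) * (gCount (p+1-(k+1+1)) : ℤ)
        = ∑ k ∈ Finset.range p, ((Bset (k+1)).card : ℤ) * (gCount (p+1-1-(k+1)) : ℤ) := by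
      apply Finset.sum_congr rfl
      intro k _
      have h1 : (Ehat (k+1+1) : ℤ) = ((Bset (k+1)).card : ℤ) := EhatS (p := k)
      have h2 : p+1-(k+1+1) = p+1-1-(k+1) := by omega
      rw [h1, h2]
    rw [hsc]
    have hg0 : (gCount (p+1-1-0) : ℤ) = (gCount p : ℤ) := by norm_num
    rw [hg0, hB0, one_mul] at hF
    linarith
  have hMain := F1 (q := p+2) (by omega)
  have hnorm : ∀ (f : ℕ → ℤ), ∑ k ∈ Finset.range (p+2), f k * (gCount (p+2-1-k) : ℤ)
      = ∑ k ∈ Finset.range (p+2), f k * (gCount (p+1-k) : ℤ) := by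
    intro f
    apply Finset.sum_congr rfl
    intro k _
    rw [show p+2-1-k = p+1-k by omega]
  rw [hnorm] at hMain
  have hsplit : ∑ k ∈ Finset.range (p+2), ((Bset k).card : ℤ) * (gCount (p+1-k) : ℤ)
      = ∑ k ∈ Finset.range (p+2), (gCount k : ℤ) * (gCount (p+1-k) : ℤ)
        - ∑ k ∈ Finset.range (p+2), (Ehat k : ℤ) * (gCount (p+1-k) : ℤ) := by
    rw [← Finset.sum_sub_distrib]
    apply Finset.sum_congr rfl
    intro k _
    rw [Bset_card]
    ring
  rw [hred, hred2]
  rw [hsplit, hEsum] at hMain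
  linarith


/-- `g 0 = g 1 = 1` and, for `n ≥ 2`,
`g n + g (n-1) - g (n-2) = Σ_{i=0}^{n-1} g i * g (n-1-i)`. -/
theorem g_recurrence :
    gCount 0 = 1 ∧ gCount 1 = 1 ∧ ∀ n, 2 ≤ n →
      (gCount n : ℤ) + gCount (n-1) - gCount (n-2) =
        ∑ i ∈ Finset.range n, (gCount i : ℤ) * gCount (n-1-i) := g_recurrence'
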